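/- Fix 0 < ε ≤ 1, y* ∈ ℝ, and k_p, k_i, k_d ∈ ℝ. There exists an initial value (x₁(0), x₂(0)) ∈ ℝ² such that any maximal (non-extendable) solution (x₁, x₂) of the closed-loop system with this initial value is defined on a finite interval [0,a) with a < ∞, and the error e(t) = x₁(t) − y* satisfies lim_{t → a⁻} e(t) = ∞. -/

import Mathlib

open Real MeasureTheory intervalIntegral Filter

/-- `IsSolOn ε ystar kp ki kd x1 x2 T` : `(x1, x2)` solves the closed-loop PID system
`x₁' = x₂`, `x₂' = (x₁² + x₂²)^((1+ε)/2) + k_p e + k_i ∫ e + k_d e'` on `[0, T)`,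
where `e(t) = x₁(t) − y*`. -/
def IsSolOn (ε ystar kp ki kd : ℝ) (x1 x2 : ℝ → ℝ) (T : ℝ) : Prop :=
  ∀ t, 0 ≤ t → t < T →
    HasDerivAt x1 (x2 t) t ∧
    HasDerivAt x2 (((x1 t) ^ 2 + (x2 t) ^ 2) ^ ((1 + ε) / 2)
      + kp * (x1 t - ystar) + ki * (∫ s in (0:ℝ)..t, (x1 s - ystar))
      + kd * x2 t) t

section helpers

/-- Monotone from pointwise derivatives. -/
lemma pid_mono_help {f f' : ℝ → ℝ} {c d : ℝ}
    (hd : ∀ t ∈ Set.Icc c d, HasDerivAt f (f' t) t)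
    (h0 : ∀ t ∈ Set.Icc c d, 0 ≤ f' t) : MonotoneOn f (Set.Icc c d) := by
  apply monotoneOn_of_deriv_nonneg (convex_Icc c d)
  · exact fun t ht => (hd t ht).continuousAt.continuousWithinAt
  · rw [interior_Icc]
    exact fun t ht => ((hd t (Set.Ioo_subset_Icc_self ht)).differentiableAt).differentiableWithinAt
  · rw [interior_Icc]
    intro t ht
    rw [(hd t (Set.Ioo_subset_Icc_self ht)).deriv]
    exact h0 t (Set.Ioo_subset_Icc_self ht)

lemma pid_anti_help {f f' : ℝ → ℝ} {c d : ℝ}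
    (hd : ∀ t ∈ Set.Icc c d, HasDerivAt f (f' t) t)
    (h0 : ∀ t ∈ Set.Icc c d, f' t ≤ 0) : AntitoneOn f (Set.Icc c d) := by
  apply antitoneOn_of_deriv_nonpos (convex_Icc c d)
  · exact fun t ht => (hd t ht).continuousAt.continuousWithinAt
  · rw [interior_Icc]
    exact fun t ht => ((hd t (Set.Ioo_subset_Icc_self ht)).differentiableAt).differentiableWithinAt
  · rw [interior_Icc]
    intro t ht
    rw [(hd t (Set.Ioo_subset_Icc_self ht)).deriv]
    exact h0 t (Set.Ioo_subset_Icc_self ht)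

/-- If the derivative at a point is positive, the function is eventually bigger to the right. -/
lemma pid_right_pos {f : ℝ → ℝ} {f' τ : ℝ} (hf : HasDerivAt f f' τ) (h : 0 < f') :
    ∀ᶠ t in nhdsWithin τ (Set.Ioi τ), f τ < f t := by
  have hs : Filter.Tendsto (slope f τ) (nhdsWithin τ {τ}ᶜ) (nhds f') :=
    hasDerivAt_iff_tendsto_slope.mp hf
  have hs' : Filter.Tendsto (slope f τ) (nhdsWithin τ (Set.Ioi τ)) (nhds f') :=
    hs.mono_left (nhdsWithin_mono _ (fun x hx => ne_of_gt hx))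
  have h1 : ∀ᶠ t in nhdsWithin τ (Set.Ioi τ), 0 < slope f τ t :=
    hs'.eventually (eventually_gt_nhds h)
  filter_upwards [h1, self_mem_nhdsWithin] with t ht1 ht2
  have : slope f τ t * (t - τ) = f t - f τ := by
    rw [slope_def_field]
    field_simp
    rw [mul_div_assoc, div_self (sub_ne_zero.mpr (ne_of_gt (Set.mem_Ioi.mp ht2))), mul_one]
  nlinarith [sub_pos.mpr (Set.mem_Ioi.mp ht2)]

/-- Monotone bounded functions on `[0,a)` have limits at `a⁻`. -/
lemma pid_mono_limit {f : ℝ → ℝ} {a L : ℝ} (ha : 0 < a)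
    (hmono : MonotoneOn f (Set.Ico 0 a)) (hbdd : ∀ t ∈ Set.Ico 0 a, f t ≤ L) :
    ∃ A, Filter.Tendsto f (nhdsWithin a (Set.Iio a)) (nhds A) ∧
      (∀ t ∈ Set.Ico 0 a, f t ≤ A) ∧ f 0 ≤ A ∧ A ≤ L := by
  have hne : (f '' Set.Ico 0 a).Nonempty := ⟨f 0, ⟨0, ⟨le_refl 0, ha⟩, rfl⟩⟩
  have hba : BddAbove (f '' Set.Ico 0 a) := ⟨L, fun y ⟨t, ht, hy⟩ => hy ▸ hbdd t ht⟩
  set A := sSup (f '' Set.Ico 0 a) with hA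
  have hle : ∀ t ∈ Set.Ico 0 a, f t ≤ A := fun t ht => le_csSup hba ⟨t, ht, rfl⟩
  refine ⟨A, ?_, hle, hle 0 ⟨le_refl 0, ha⟩, csSup_le hne (fun y ⟨t, ht, hy⟩ => hy ▸ hbdd t ht)⟩
  rw [tendsto_order]
  constructor
  · intro l hl
    obtain ⟨y, ⟨t0, ht0, hy⟩, hly⟩ := exists_lt_of_lt_csSup hne hl
    have hmem : Set.Ioo t0 a ∈ nhdsWithin a (Set.Iio a) :=
      Ioo_mem_nhdsLT_of_mem ⟨ht0.2, le_refl a⟩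
    filter_upwards [hmem] with t ht
    have : f t0 ≤ f t := hmono ht0 ⟨le_trans ht0.1 ht.1.le, ht.2⟩ ht.1.le
    exact lt_of_lt_of_le (hy ▸ hly) this
  · intro u hu
    have hmem : Set.Ioo (a/2) a ∈ nhdsWithin a (Set.Iio a) :=
      Ioo_mem_nhdsLT_of_mem ⟨half_lt_self ha, le_refl a⟩
    filter_upwards [hmem] with t ht
    exact lt_of_le_of_lt (hle t ⟨le_of_lt (lt_of_le_of_lt (half_pos ha).le ht.1), ht.2⟩) hu

/-- Monotone unbounded functions on `[0,a)` tend to `atTop` at `a⁻`. -/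
lemma pid_mono_unbdd {f : ℝ → ℝ} {a : ℝ} (ha : 0 < a)
    (hmono : MonotoneOn f (Set.Ico 0 a))
    (hunb : ∀ L, ∃ t ∈ Set.Ico 0 a, L < f t) :
    Filter.Tendsto f (nhdsWithin a (Set.Iio a)) Filter.atTop := by
  rw [tendsto_atTop]
  intro C
  obtain ⟨t0, ht0, hC⟩ := hunb C
  have hmem : Set.Ioo t0 a ∈ nhdsWithin a (Set.Iio a) :=
    Ioo_mem_nhdsLT_of_mem ⟨ht0.2, le_refl a⟩
  filter_upwards [hmem] with t ht
  exact le_trans hC.le (hmono ht0 ⟨le_trans ht0.1 ht.1.le, ht.2⟩ ht.1.le)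

end helpers

noncomputable def pidRHS (ε ystar kp ki kd : ℝ) (x1 x2 : ℝ → ℝ) (t : ℝ) : ℝ :=
  ((x1 t) ^ 2 + (x2 t) ^ 2) ^ ((1 + ε) / 2)
    + kp * (x1 t - ystar) + ki * (∫ s in (0:ℝ)..t, (x1 s - ystar)) + kd * x2 t

lemma pid_sol_rhs {ε ystar kp ki kd : ℝ} {x1 x2 : ℝ → ℝ} {a : ℝ}
    (sol : IsSolOn ε ystar kp ki kd x1 x2 a) {t : ℝ} (ht0 : 0 ≤ t) (hta : t < a) :
    HasDerivAt x2 (pidRHS ε ystar kp ki kd x1 x2 t) t := (sol t ht0 hta).2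

lemma pid_core {ε ystar kp ki kd K0 M : ℝ} {x1 x2 : ℝ → ℝ} {a : ℝ}
    (hε0 : 0 < ε) (hε1 : ε ≤ 1)
    (hkp : |kp| ≤ K0) (hki : |ki| ≤ K0) (hkd : |kd| ≤ K0) (hK1 : 1 ≤ K0)
    (hM8 : 8 * K0 ≤ M ^ ε) (hM1 : 1 ≤ M)
    (sol : IsSolOn ε ystar kp ki kd x1 x2 a)
    (hx10 : x1 0 = ystar + M) (hx20 : x2 0 = M)
    {t : ℝ} (ht0 : 0 ≤ t) (hta : t < a)
    (hP : ∀ s, 0 ≤ s → s ≤ t → M ≤ x2 s ∧ x1 s - ystar ≤ 2 * x2 s) :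
    M ≤ x1 t - ystar ∧
    0 ≤ (∫ s in (0:ℝ)..t, (x1 s - ystar)) ∧
    (∫ s in (0:ℝ)..t, (x1 s - ystar)) ≤ 2 * (x1 t - ystar) ∧
    (1/8) * x2 t ^ (1 + ε) ≤ pidRHS ε ystar kp ki kd x1 x2 t ∧
    M ≤ 2 * pidRHS ε ystar kp ki kd x1 x2 t - x2 t := by
  have hMpos : (0:ℝ) < M := lt_of_lt_of_le one_pos hM1
  have hsub : ∀ s, 0 ≤ s → s ≤ t → s < a := fun s _ hs => lt_of_le_of_lt hs hta
  -- derivative of x1 at points of [0,t]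
  have hd1 : ∀ s ∈ Set.Icc 0 t, HasDerivAt (fun u => x1 u - ystar) (x2 s) s :=
    fun s hs => ((sol s hs.1 (hsub s hs.1 hs.2)).1).sub_const ystar
  have hmono : MonotoneOn (fun u => x1 u - ystar) (Set.Icc 0 t) :=
    pid_mono_help hd1 (fun s hs => le_trans hMpos.le (hP s hs.1 hs.2).1)
  have he0 : x1 0 - ystar = M := by rw [hx10]; ring
  have heM : ∀ s, 0 ≤ s → s ≤ t → M ≤ x1 s - ystar := by
    intro s h0 hst
    have := hmono (Set.mem_Icc.mpr ⟨le_refl 0, ht0⟩) (Set.mem_Icc.mpr ⟨h0, hst⟩) h0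
    simp only at this
    rw [he0] at this; exact this
  have het : M ≤ x1 t - ystar := heM t ht0 le_rfl
  -- continuity for integrability
  have hcont1 : ContinuousOn (fun s => x1 s - ystar) (Set.uIcc 0 t) := by
    rw [Set.uIcc_of_le ht0]
    exact fun s hs => (hd1 s hs).continuousAt.continuousWithinAt
  have hcont2 : ContinuousOn x2 (Set.uIcc 0 t) := by
    rw [Set.uIcc_of_le ht0]
    exact fun s hs => (pid_sol_rhs sol hs.1 (hsub s hs.1 hs.2)).continuousAt.continuousWithinAt
  have hint1 : IntervalIntegrable (fun s => x1 s - ystar) volume 0 t :=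
    hcont1.intervalIntegrable
  have hint2 : IntervalIntegrable (fun s => 2 * x2 s) volume 0 t :=
    (hcont2.const_smul (2:ℝ)).intervalIntegrable
  -- I ≥ 0
  have hIlow : 0 ≤ (∫ s in (0:ℝ)..t, (x1 s - ystar)) := by
    apply intervalIntegral.integral_nonneg ht0
    intro s hs
    exact le_trans hMpos.le (heM s hs.1 hs.2)
  -- I ≤ 2 e t
  have hIup : (∫ s in (0:ℝ)..t, (x1 s - ystar)) ≤ 2 * (x1 t - ystar) := by
    have hstep1 : (∫ s in (0:ℝ)..t, (x1 s - ystar)) ≤ ∫ s in (0:ℝ)..t, 2 * x2 s := by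
      apply intervalIntegral.integral_mono_on ht0 hint1 hint2
      intro s hs
      exact (hP s hs.1 hs.2).2
    have hftc : (∫ s in (0:ℝ)..t, x2 s) = x1 t - x1 0 := by
      apply intervalIntegral.integral_eq_sub_of_hasDerivAt
      · intro s hs
        rw [Set.uIcc_of_le ht0] at hs
        exact (sol s hs.1 (hsub s hs.1 hs.2)).1
      · exact hcont2.intervalIntegrable
    have hstep2 : (∫ s in (0:ℝ)..t, 2 * x2 s) = 2 * (x1 t - x1 0) := by
      rw [intervalIntegral.integral_const_mul, hftc]
    rw [hstep2, hx10] at hstep1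
    linarith [hstep1, hMpos]
  refine ⟨het, hIlow, hIup, ?_⟩
  -- rpow facts
  have hx2t : M ≤ x2 t := (hP t ht0 le_rfl).1
  have hx2pos : (0:ℝ) < x2 t := lt_of_lt_of_le hMpos hx2t
  have hrp : x2 t ^ (1 + ε) ≤ ((x1 t) ^ 2 + (x2 t) ^ 2) ^ ((1 + ε) / 2) := by
    have h1 : ((x2 t) ^ 2 : ℝ) ^ ((1 + ε) / 2) = x2 t ^ (1 + ε) := by
      rw [← Real.rpow_natCast (x2 t) 2, ← Real.rpow_mul hx2pos.le]
      norm_num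
      congr 1
      ring
    rw [← h1]
    apply Real.rpow_le_rpow (sq_nonneg _) (le_add_of_nonneg_left (sq_nonneg _))
    positivity
  have hsplit : x2 t ^ (1 + ε) = x2 t * x2 t ^ ε := by
    rw [Real.rpow_add hx2pos, Real.rpow_one]
  have hx2e : 8 * K0 ≤ x2 t ^ ε := le_trans hM8 (Real.rpow_le_rpow hMpos.le hx2t hε0.le)
  -- bounds on the three perturbation terms
  have habs1 : -(K0 * (2 * x2 t)) ≤ kp * (x1 t - ystar) := by
    have h1 : |kp * (x1 t - ystar)| ≤ K0 * (2 * x2 t) := by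
      rw [abs_mul]
      apply mul_le_mul hkp _ (abs_nonneg _) (le_trans (abs_nonneg _) hkp)
      rw [abs_of_nonneg (le_trans hMpos.le het)]
      exact (hP t ht0 le_rfl).2
    linarith [neg_abs_le (kp * (x1 t - ystar)), h1]
  have habs2 : -(K0 * (4 * x2 t)) ≤ ki * (∫ s in (0:ℝ)..t, (x1 s - ystar)) := by
    have h1 : |ki * (∫ s in (0:ℝ)..t, (x1 s - ystar))| ≤ K0 * (4 * x2 t) := by
      rw [abs_mul]
      apply mul_le_mul hki _ (abs_nonneg _) (le_trans (abs_nonneg _) hki)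
      rw [abs_of_nonneg hIlow]
      calc (∫ s in (0:ℝ)..t, (x1 s - ystar)) ≤ 2 * (x1 t - ystar) := hIup
        _ ≤ 2 * (2 * x2 t) := by linarith [(hP t ht0 le_rfl).2]
        _ = 4 * x2 t := by ring
    linarith [neg_abs_le (ki * (∫ s in (0:ℝ)..t, (x1 s - ystar))), h1]
  have habs3 : -(K0 * x2 t) ≤ kd * x2 t := by
    have h1 : |kd * x2 t| ≤ K0 * x2 t := by
      rw [abs_mul]
      apply mul_le_mul hkd _ (abs_nonneg _) (le_trans (abs_nonneg _) hkd)
      rw [abs_of_nonneg hx2pos.le]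
    linarith [neg_abs_le (kd * x2 t), h1]
  have hdom : 7 * K0 * x2 t ≤ (7/8) * x2 t ^ (1 + ε) := by
    rw [hsplit]
    nlinarith [hx2e, hx2pos]
  have hlow : x2 t ^ (1 + ε) - 7 * K0 * x2 t ≤ pidRHS ε ystar kp ki kd x1 x2 t := by
    unfold pidRHS
    linarith [hrp, habs1, habs2, habs3]
  constructor
  · linarith [hlow, hdom]
  · nlinarith [hlow, hsplit, hx2e, hx2pos, hx2t, hK1, hMpos]

lemma pid_boot {ε ystar kp ki kd K0 M : ℝ} {x1 x2 : ℝ → ℝ} {a : ℝ}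
    (hε0 : 0 < ε) (hε1 : ε ≤ 1)
    (hkp : |kp| ≤ K0) (hki : |ki| ≤ K0) (hkd : |kd| ≤ K0) (hK1 : 1 ≤ K0)
    (hM8 : 8 * K0 ≤ M ^ ε) (hM1 : 1 ≤ M)
    (sol : IsSolOn ε ystar kp ki kd x1 x2 a)
    (hx10 : x1 0 = ystar + M) (hx20 : x2 0 = M) :
    ∀ t, 0 ≤ t → t < a → (M ≤ x2 t ∧ x1 t - ystar ≤ 2 * x2 t) := by
  have hMpos : (0:ℝ) < M := lt_of_lt_of_le one_pos hM1
  by_contra hcon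
  push_neg at hcon
  obtain ⟨t₀, ht₀0, ht₀a, ht₀P⟩ := hcon
  set B : Set ℝ := {t : ℝ | 0 ≤ t ∧ t < a ∧ ¬(M ≤ x2 t ∧ x1 t - ystar ≤ 2 * x2 t)} with hB
  have hne : B.Nonempty := ⟨t₀, ht₀0, ht₀a, fun hP => absurd hP.2 (not_le.mpr (ht₀P hP.1))⟩
  have hbdd : BddBelow B := ⟨0, fun t ht => ht.1⟩
  set τ := sInf B with hτ
  have hτ0 : 0 ≤ τ := le_csInf hne (fun t ht => ht.1)
  have hτa : τ < a := lt_of_le_of_lt (csInf_le hbdd hne.choose_spec) hne.choose_spec.2.1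
  have hPbefore : ∀ s, 0 ≤ s → s < τ → M ≤ x2 s ∧ x1 s - ystar ≤ 2 * x2 s := by
    intro s hs0 hsτ
    by_contra hPs
    exact absurd (csInf_le hbdd (⟨hs0, lt_trans hsτ hτa, hPs⟩ : s ∈ B)) (not_le.mpr hsτ)
  have hPτ : M ≤ x2 τ ∧ x1 τ - ystar ≤ 2 * x2 τ := by
    rcases eq_or_lt_of_le hτ0 with h0τ | h0τ
    · constructor
      · rw [← h0τ, hx20]
      · rw [← h0τ, hx10, hx20]; linarith
    · have hc2 : ContinuousAt x2 τ := (pid_sol_rhs sol hτ0 hτa).continuousAt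
      have hc1 : ContinuousAt x1 τ := (sol τ hτ0 hτa).1.continuousAt
      have hmem : Set.Ioo 0 τ ∈ nhdsWithin τ (Set.Iio τ) :=
        Ioo_mem_nhdsLT_of_mem ⟨h0τ, le_refl τ⟩
      haveI : (nhdsWithin τ (Set.Iio τ)).NeBot := nhdsLT_neBot τ
      constructor
      · apply ge_of_tendsto (hc2.continuousWithinAt : ContinuousWithinAt x2 (Set.Iio τ) τ)
        filter_upwards [hmem] with s hs
        exact (hPbefore s hs.1.le hs.2).1
      · have : Filter.Tendsto (fun t => 2 * x2 t - (x1 t - ystar))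
            (nhdsWithin τ (Set.Iio τ)) (nhds (2 * x2 τ - (x1 τ - ystar))) := by
          apply Filter.Tendsto.sub
          · exact ((hc2.continuousWithinAt : ContinuousWithinAt x2 (Set.Iio τ) τ)).const_mul 2
          · exact ((hc1.continuousWithinAt : ContinuousWithinAt x1 (Set.Iio τ) τ)).sub_const ystar
        have h0le : 0 ≤ 2 * x2 τ - (x1 τ - ystar) := by
          apply ge_of_tendsto this
          filter_upwards [hmem] with s hs
          linarith [(hPbefore s hs.1.le hs.2).2]
        linarith
  have hPle : ∀ s, 0 ≤ s → s ≤ τ → M ≤ x2 s ∧ x1 s - ystar ≤ 2 * x2 s := by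
    intro s hs0 hsτ
    rcases lt_or_eq_of_le hsτ with h | h
    · exact hPbefore s hs0 h
    · rw [h]; exact hPτ
  obtain ⟨hetM, hIlow, hIup, hRlow, hRψ⟩ :=
    pid_core hε0 hε1 hkp hki hkd hK1 hM8 hM1 sol hx10 hx20 hτ0 hτa hPle
  have hx2τ : (0:ℝ) < x2 τ := lt_of_lt_of_le hMpos hPτ.1
  have hRpos : 0 < pidRHS ε ystar kp ki kd x1 x2 τ := by
    have : (0:ℝ) < (1/8) * x2 τ ^ (1 + ε) := by positivity
    linarith
  have h1 : ∀ᶠ t in nhdsWithin τ (Set.Ioi τ), x2 τ < x2 t :=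
    pid_right_pos (pid_sol_rhs sol hτ0 hτa) hRpos
  have hψd : HasDerivAt (fun t => 2 * x2 t - (x1 t - ystar))
      (2 * pidRHS ε ystar kp ki kd x1 x2 τ - x2 τ) τ :=
    ((pid_sol_rhs sol hτ0 hτa).const_mul 2).sub ((sol τ hτ0 hτa).1.sub_const ystar)
  have h2 : ∀ᶠ t in nhdsWithin τ (Set.Ioi τ),
      2 * x2 τ - (x1 τ - ystar) < 2 * x2 t - (x1 t - ystar) :=
    pid_right_pos hψd (lt_of_lt_of_le hMpos hRψ)
  have hU : {t | x2 τ < x2 t ∧ 2 * x2 τ - (x1 τ - ystar) < 2 * x2 t - (x1 t - ystar)}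
      ∈ nhdsWithin τ (Set.Ioi τ) := (h1.and h2)
  obtain ⟨c, hcτ, hsub'⟩ := mem_nhdsGT_iff_exists_Ioo_subset.mp hU
  have hτmin : τ < min c a := lt_min hcτ hτa
  have hex : ∃ t ∈ B, t < min c a := by
    by_contra hno
    push_neg at hno
    exact absurd (le_csInf hne hno) (not_le.mpr hτmin)
  obtain ⟨t, htB, htc⟩ := hex
  have hτt : τ ≤ t := csInf_le hbdd htB
  rcases eq_or_lt_of_le hτt with h | h
  · exact htB.2.2 (h ▸ hPτ)
  · have htU := hsub' ⟨h, lt_of_lt_of_le htc (min_le_left c a)⟩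
    exact htB.2.2 ⟨le_trans hPτ.1 htU.1.le, by linarith [htU.2, hPτ.2]⟩

lemma pid_quarter {ε ystar kp ki kd K0 M : ℝ} {x1 x2 : ℝ → ℝ} {a : ℝ}
    (hε0 : 0 < ε) (hε1 : ε ≤ 1)
    (hkp : |kp| ≤ K0) (hki : |ki| ≤ K0) (hkd : |kd| ≤ K0) (hK1 : 1 ≤ K0)
    (hM8 : 8 * K0 ≤ M ^ ε) (hM8e : 8 * K0 / ε ≤ M ^ ε) (hM1 : 1 ≤ M)
    (sol : IsSolOn ε ystar kp ki kd x1 x2 a)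
    (hx10 : x1 0 = ystar + M) (hx20 : x2 0 = M) :
    ∀ t, 0 ≤ t → t < a → t < 1 / K0 := by
  intro t ht0 hta
  have hMpos : (0:ℝ) < M := lt_of_lt_of_le one_pos hM1
  have hboot := pid_boot hε0 hε1 hkp hki hkd hK1 hM8 hM1 sol hx10 hx20
  have hsub : ∀ s, s ∈ Set.Icc (0:ℝ) t → s < a := fun s hs => lt_of_le_of_lt hs.2 hta
  have hx2pos : ∀ s, s ∈ Set.Icc (0:ℝ) t → 0 < x2 s :=
    fun s hs => lt_of_lt_of_le hMpos (hboot s hs.1 (hsub s hs)).1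
  have hcore : ∀ s, s ∈ Set.Icc (0:ℝ) t →
      (1/8) * x2 s ^ (1 + ε) ≤ pidRHS ε ystar kp ki kd x1 x2 s := by
    intro s hs
    exact (pid_core hε0 hε1 hkp hki hkd hK1 hM8 hM1 sol hx10 hx20 hs.1 (hsub s hs)
      (fun u hu0 hus => hboot u hu0 (lt_of_le_of_lt hus (hsub s hs)))).2.2.2.1
  -- ψ antitone
  have hψd : ∀ s ∈ Set.Icc (0:ℝ) t, HasDerivAt (fun u => x2 u ^ (-ε) + (ε/8) * u)
      (pidRHS ε ystar kp ki kd x1 x2 s * (-ε) * x2 s ^ (-ε - 1) + ε/8) s := by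
    intro s hs
    have h1 : HasDerivAt (fun u => x2 u ^ (-ε))
        (pidRHS ε ystar kp ki kd x1 x2 s * (-ε) * x2 s ^ (-ε - 1)) s :=
      HasDerivAt.rpow_const (pid_sol_rhs sol hs.1 (hsub s hs)) (Or.inl (hx2pos s hs).ne')
    have h2 := h1.add ((hasDerivAt_id' s).const_mul (ε/8))
    rw [mul_one] at h2; exact h2
  have hψ0 : ∀ s ∈ Set.Icc (0:ℝ) t,
      pidRHS ε ystar kp ki kd x1 x2 s * (-ε) * x2 s ^ (-ε - 1) + ε/8 ≤ 0 := by
    intro s hs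
    have key := hcore s hs
    have hpos := hx2pos s hs
    have hprod : x2 s ^ (1 + ε) * x2 s ^ (-ε - 1) = 1 := by
      rw [← Real.rpow_add hpos, show (1 + ε + (-ε - 1) : ℝ) = 0 by ring, Real.rpow_zero]
    have hxp : (0:ℝ) < x2 s ^ (-ε - 1) := Real.rpow_pos_of_pos hpos _
    have h2 : (1/8 : ℝ) ≤ pidRHS ε ystar kp ki kd x1 x2 s * x2 s ^ (-ε - 1) := by
      calc (1/8 : ℝ) = (1/8) * (x2 s ^ (1 + ε) * x2 s ^ (-ε - 1)) := by rw [hprod]; ring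
        _ = ((1/8) * x2 s ^ (1 + ε)) * x2 s ^ (-ε - 1) := by ring
        _ ≤ _ := mul_le_mul_of_nonneg_right key hxp.le
    nlinarith [h2, hε0]
  have hanti : AntitoneOn (fun u => x2 u ^ (-ε) + (ε/8) * u) (Set.Icc 0 t) :=
    pid_anti_help hψd hψ0
  have h0mem : (0:ℝ) ∈ Set.Icc (0:ℝ) t := ⟨le_refl 0, ht0⟩
  have htmem : t ∈ Set.Icc (0:ℝ) t := ⟨ht0, le_refl t⟩
  have hineq := hanti h0mem htmem ht0
  simp only at hineq
  rw [hx20] at hineq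
  have hxtp : (0:ℝ) < x2 t ^ (-ε) := Real.rpow_pos_of_pos (hx2pos t htmem) _
  have hMinv : M ^ (-ε) = (M ^ ε)⁻¹ := Real.rpow_neg hMpos.le ε
  have hKpos : (0:ℝ) < K0 := lt_of_lt_of_le one_pos hK1
  have hMe_pos : (0:ℝ) < 8 * K0 / ε := by positivity
  have hinv : (M ^ ε)⁻¹ ≤ ε / (8 * K0) := by
    rw [show ε / (8 * K0) = (8 * K0 / ε)⁻¹ by field_simp]
    exact inv_anti₀ hMe_pos hM8e
  rw [hMinv] at hineq
  have : (ε/8) * t < ε / (8 * K0) := by linarith [hineq, hxtp, hinv]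
  rw [lt_div_iff₀ hKpos]
  have h2 : ε/8 * t * K0 < ε / (8*K0) * K0 := mul_lt_mul_of_pos_right this hKpos
  have h3 : ε / (8*K0) * K0 = ε/8 := by field_simp
  nlinarith [h2, h3, hε0]

lemma pid_mono_help_Ico {f f' : ℝ → ℝ} {c d : ℝ}
    (hd : ∀ t ∈ Set.Ico c d, HasDerivAt f (f' t) t)
    (h0 : ∀ t ∈ Set.Ico c d, 0 ≤ f' t) : MonotoneOn f (Set.Ico c d) := by
  apply monotoneOn_of_deriv_nonneg (convex_Ico c d)
  · exact fun t ht => (hd t ht).continuousAt.continuousWithinAt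
  · rw [interior_Ico]
    exact fun t ht => ((hd t (Set.Ioo_subset_Ico_self ht)).differentiableAt).differentiableWithinAt
  · rw [interior_Ico]
    intro t ht
    rw [(hd t (Set.Ioo_subset_Ico_self ht)).deriv]
    exact h0 t (Set.Ioo_subset_Ico_self ht)

set_option maxHeartbeats 2000000 in
/-- Case (ii) is impossible: error bounded but `x2` unbounded. -/
lemma pid_x2_unbdd_absurd {ε ystar kp ki kd K0 M L : ℝ} {x1 x2 : ℝ → ℝ} {a : ℝ}
    (hε0 : 0 < ε) (hε1 : ε ≤ 1)
    (hkp : |kp| ≤ K0) (hki : |ki| ≤ K0) (hkd : |kd| ≤ K0) (hK1 : 1 ≤ K0)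
    (hM8 : 8 * K0 ≤ M ^ ε) (hM8e : 8 * K0 / ε ≤ M ^ ε) (hM1 : 1 ≤ M)
    (sol : IsSolOn ε ystar kp ki kd x1 x2 a)
    (hx10 : x1 0 = ystar + M) (hx20 : x2 0 = M) (h0a : 0 < a)
    (hL : ∀ t, 0 ≤ t → t < a → x1 t - ystar ≤ L)
    (hunb : ∀ C, ∃ t, 0 ≤ t ∧ t < a ∧ C < x2 t) : False := by
  have hMpos : (0:ℝ) < M := lt_of_lt_of_le one_pos hM1
  have hKpos : (0:ℝ) < K0 := lt_of_lt_of_le one_pos hK1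
  have hboot := pid_boot hε0 hε1 hkp hki hkd hK1 hM8 hM1 sol hx10 hx20
  have hquarter := pid_quarter hε0 hε1 hkp hki hkd hK1 hM8 hM8e hM1 sol hx10 hx20
  have ha1 : a ≤ 1 := by
    by_contra h
    push_neg at h
    have := hquarter 1 zero_le_one h
    have hK1' : 1 / K0 ≤ 1 := by rw [div_le_one hKpos]; exact hK1
    linarith
  have hLM : M ≤ L := by
    have := hL 0 le_rfl h0a
    rw [hx10] at this; linarith
  have hLpos : 0 < L := lt_of_lt_of_le hMpos hLM
  have hcore : ∀ t, 0 ≤ t → t < a →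
      M ≤ x1 t - ystar ∧
      0 ≤ (∫ s in (0:ℝ)..t, (x1 s - ystar)) ∧
      (∫ s in (0:ℝ)..t, (x1 s - ystar)) ≤ 2 * (x1 t - ystar) ∧
      (1/8) * x2 t ^ (1 + ε) ≤ pidRHS ε ystar kp ki kd x1 x2 t ∧
      M ≤ 2 * pidRHS ε ystar kp ki kd x1 x2 t - x2 t := by
    intro t ht0 hta
    exact pid_core hε0 hε1 hkp hki hkd hK1 hM8 hM1 sol hx10 hx20 ht0 hta
      (fun u hu0 hus => hboot u hu0 (lt_of_le_of_lt hus hta))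
  -- x2 is monotone on [0,a)
  have hx2mono : MonotoneOn x2 (Set.Ico 0 a) := by
    apply pid_mono_help_Ico (fun t ht => pid_sol_rhs sol ht.1 ht.2)
    intro t ht
    have h1 := (hcore t ht.1 ht.2).2.2.2.1
    have h2 : 0 < x2 t := lt_of_lt_of_le hMpos (hboot t ht.1 ht.2).1
    have : (0:ℝ) < (1/8) * x2 t ^ (1+ε) := by positivity
    linarith
  -- pick t1 with x2 t1 big
  set C3 : ℝ := max (L + |ystar|) (3 * K0 * L) with hC3
  obtain ⟨t1, ht10, ht1a, ht1big⟩ := hunb C3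
  have hbig : ∀ t, t1 ≤ t → t < a → C3 ≤ x2 t := by
    intro t ht1t hta
    exact le_trans ht1big.le (hx2mono ⟨ht10, ht1a⟩ ⟨le_trans ht10 ht1t, hta⟩ ht1t)
  -- upper bound for RHS on [t1, a)
  have hup : ∀ t, t1 ≤ t → t < a → pidRHS ε ystar kp ki kd x1 x2 t ≤ 4 * x2 t ^ (1 + ε) := by
    intro t ht1t hta
    have ht0 : 0 ≤ t := le_trans ht10 ht1t
    obtain ⟨het, hIl, hIu, _, _⟩ := hcore t ht0 hta
    have hC3t := hbig t ht1t hta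
    have hx2M := (hboot t ht0 hta).1
    have hx2pos : 0 < x2 t := lt_of_lt_of_le hMpos hx2M
    have hx21 : 1 ≤ x2 t := le_trans hM1 hx2M
    have heL := hL t ht0 hta
    have habs_x1 : |x1 t| ≤ L + |ystar| := by
      have : x1 t = (x1 t - ystar) + ystar := by ring
      rw [this]
      apply le_trans (abs_add_le _ _)
      have : |x1 t - ystar| ≤ L := abs_le.mpr ⟨by linarith, heL⟩
      linarith
    have hx1sq : (x1 t)^2 ≤ (x2 t)^2 := by
      have h1 : |x1 t| ≤ x2 t := le_trans habs_x1 (le_trans (le_max_left _ _) hC3t)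
      nlinarith [abs_nonneg (x1 t), sq_abs (x1 t)]
    have hpow2 : ((x2 t)^2 : ℝ) ^ ((1+ε)/2) = x2 t ^ (1+ε) := by
      rw [← Real.rpow_natCast (x2 t) 2, ← Real.rpow_mul hx2pos.le]
      norm_num
      congr 1
      ring
    have hA : ((x1 t)^2 + (x2 t)^2) ^ ((1+ε)/2) ≤ 2 * x2 t ^ (1+ε) := by
      calc ((x1 t)^2 + (x2 t)^2) ^ ((1+ε)/2) ≤ (2 * (x2 t)^2) ^ ((1+ε)/2) := by
            apply Real.rpow_le_rpow (by positivity) (by nlinarith) (by positivity)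
        _ = (2:ℝ) ^ ((1+ε)/2) * ((x2 t)^2) ^ ((1+ε)/2) :=
            Real.mul_rpow (by norm_num) (sq_nonneg _)
        _ ≤ 2 * x2 t ^ (1+ε) := by
            rw [hpow2]
            apply mul_le_mul_of_nonneg_right _ (Real.rpow_nonneg hx2pos.le _)
            calc (2:ℝ) ^ ((1+ε)/2) ≤ (2:ℝ) ^ (1:ℝ) :=
                  Real.rpow_le_rpow_of_exponent_le one_le_two (by linarith)
              _ = 2 := Real.rpow_one 2
    have hsplit : x2 t ^ (1 + ε) = x2 t * x2 t ^ ε := by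
      rw [Real.rpow_add hx2pos, Real.rpow_one]
    have hx2e : 8 * K0 ≤ x2 t ^ ε := le_trans hM8 (Real.rpow_le_rpow hMpos.le hx2M hε0.le)
    have hx2le : x2 t ≤ x2 t ^ (1+ε) := by
      calc x2 t = x2 t ^ (1:ℝ) := (Real.rpow_one _).symm
        _ ≤ x2 t ^ (1+ε) := Real.rpow_le_rpow_of_exponent_le hx21 (by linarith)
    have hterm1 : kp * (x1 t - ystar) ≤ K0 * L := by
      calc kp * (x1 t - ystar) ≤ |kp * (x1 t - ystar)| := le_abs_self _
        _ = |kp| * |x1 t - ystar| := abs_mul _ _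
        _ ≤ K0 * L := mul_le_mul hkp (abs_le.mpr ⟨by linarith, heL⟩) (abs_nonneg _) hKpos.le
    have hterm2 : ki * (∫ s in (0:ℝ)..t, (x1 s - ystar)) ≤ K0 * (2*L) := by
      calc ki * (∫ s in (0:ℝ)..t, (x1 s - ystar))
          ≤ |ki * (∫ s in (0:ℝ)..t, (x1 s - ystar))| := le_abs_self _
        _ = |ki| * |∫ s in (0:ℝ)..t, (x1 s - ystar)| := abs_mul _ _
        _ ≤ K0 * (2*L) := by
            apply mul_le_mul hki _ (abs_nonneg _) hKpos.le
            rw [abs_of_nonneg hIl]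
            linarith
    have hterm3 : kd * x2 t ≤ x2 t ^ (1+ε) := by
      calc kd * x2 t ≤ |kd * x2 t| := le_abs_self _
        _ = |kd| * x2 t := by rw [abs_mul, abs_of_nonneg hx2pos.le]
        _ ≤ x2 t ^ (1+ε) := by
            rw [hsplit]
            have : |kd| ≤ x2 t ^ ε := le_trans hkd (by linarith)
            nlinarith [hx2pos]
    have h3KL : 3 * K0 * L ≤ x2 t ^ (1+ε) := le_trans (le_trans (le_max_right _ _) hC3t) hx2le
    unfold pidRHS
    linarith [hA, hterm1, hterm2, hterm3, h3KL]
  -- x2 tends to infinity at a⁻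
  have hx2top : Filter.Tendsto x2 (nhdsWithin a (Set.Iio a)) Filter.atTop := by
    apply pid_mono_unbdd h0a hx2mono
    intro C
    obtain ⟨t, ht0, hta, htC⟩ := hunb C
    exact ⟨t, ⟨ht0, hta⟩, htC⟩
  have hx2invtend : Filter.Tendsto (fun s => x2 s ^ (-ε)) (nhdsWithin a (Set.Iio a)) (nhds 0) :=
    (tendsto_rpow_neg_atTop hε0).comp hx2top
  -- key decay estimate
  have hkey : ∀ t, t1 ≤ t → t < a → x2 t ^ (-ε) ≤ 4 * ε * (a - t) := by
    intro t ht1t hta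
    have ht0 : 0 ≤ t := le_trans ht10 ht1t
    have htend : Filter.Tendsto (fun s => x2 s ^ (-ε) + 4 * ε * (s - t))
        (nhdsWithin a (Set.Iio a)) (nhds (0 + 4 * ε * (a - t))) := by
      apply hx2invtend.add
      apply Filter.Tendsto.const_mul
      exact (tendsto_nhdsWithin_of_tendsto_nhds (Continuous.tendsto continuous_id a)).sub_const t
    rw [zero_add] at htend
    apply ge_of_tendsto htend
    filter_upwards [Ioo_mem_nhdsLT_of_mem (Set.mem_Ioc.mpr ⟨hta, le_refl a⟩)] with s hs
    -- monotone ρ on [t, s]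
    have hsa : s < a := hs.2
    have hts : t ≤ s := hs.1.le
    have hρ : MonotoneOn (fun u => x2 u ^ (-ε) + 4 * ε * u) (Set.Icc t s) := by
      apply pid_mono_help
      · intro u hu
        have hu0 : 0 ≤ u := le_trans ht0 hu.1
        have hua : u < a := lt_of_le_of_lt hu.2 hsa
        have hx2posu : 0 < x2 u := lt_of_lt_of_le hMpos (hboot u hu0 hua).1
        exact ((pid_sol_rhs sol hu0 hua).rpow_const (Or.inl hx2posu.ne')).add
          (by simpa using (hasDerivAt_id u).const_mul (4*ε))
      · intro u hu
        have hu0 : 0 ≤ u := le_trans ht0 hu.1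
        have hua : u < a := lt_of_le_of_lt hu.2 hsa
        have hx2posu : 0 < x2 u := lt_of_lt_of_le hMpos (hboot u hu0 hua).1
        have hupu := hup u (le_trans ht1t hu.1) hua
        have hxp : (0:ℝ) < x2 u ^ (-ε - 1) := Real.rpow_pos_of_pos hx2posu _
        have hprod : x2 u ^ (1 + ε) * x2 u ^ (-ε - 1) = 1 := by
          rw [← Real.rpow_add hx2posu, show (1 + ε + (-ε - 1) : ℝ) = 0 by ring, Real.rpow_zero]
        have h2 : pidRHS ε ystar kp ki kd x1 x2 u * x2 u ^ (-ε - 1) ≤ 4 := by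
          calc pidRHS ε ystar kp ki kd x1 x2 u * x2 u ^ (-ε - 1)
              ≤ (4 * x2 u ^ (1+ε)) * x2 u ^ (-ε - 1) := mul_le_mul_of_nonneg_right hupu hxp.le
            _ = 4 * (x2 u ^ (1+ε) * x2 u ^ (-ε-1)) := by ring
            _ = 4 := by rw [hprod]; ring
        have hRpos : 0 ≤ pidRHS ε ystar kp ki kd x1 x2 u := by
          have := (hcore u hu0 hua).2.2.2.1
          have h3 : (0:ℝ) < (1/8) * x2 u ^ (1+ε) := by positivity
          linarith
        nlinarith [h2, hε0, hxp, hRpos]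
    have := hρ (Set.mem_Icc.mpr ⟨le_refl t, hts⟩) (Set.mem_Icc.mpr ⟨hts, le_refl s⟩) hts
    simp only at this
    linarith
  -- lower bound x2 t ≥ c/(a-t)
  set c : ℝ := (4*ε) ^ (-(1/ε)) with hc
  have hcpos : 0 < c := Real.rpow_pos_of_pos (by positivity) _
  have hlow : ∀ t, t1 ≤ t → t < a → c * (a - t)⁻¹ ≤ x2 t := by
    intro t ht1t hta
    have ht0 : 0 ≤ t := le_trans ht10 ht1t
    have hat : 0 < a - t := by linarith
    have hat1 : a - t ≤ 1 := by linarith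
    have hx2pos : 0 < x2 t := lt_of_lt_of_le hMpos (hboot t ht0 hta).1
    have h1 := hkey t ht1t hta
    have h2 : (4 * ε * (a - t)) ^ (-(1/ε)) ≤ (x2 t ^ (-ε)) ^ (-(1/ε)) :=
      Real.rpow_le_rpow_of_nonpos (by positivity) h1 (by rw [neg_nonpos]; positivity)
    have h3 : (x2 t ^ (-ε)) ^ (-(1/ε)) = x2 t := by
      rw [← Real.rpow_mul hx2pos.le]
      rw [show (-ε * -(1/ε) : ℝ) = 1 by field_simp, Real.rpow_one]
    have h4 : (4 * ε * (a - t)) ^ (-(1/ε)) = c * (a - t) ^ (-(1/ε)) := by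
      rw [Real.mul_rpow (by positivity) hat.le]
    have h5 : (a - t)⁻¹ ≤ (a - t) ^ (-(1/ε)) := by
      rw [← Real.rpow_neg_one (a - t)]
      apply Real.rpow_le_rpow_of_exponent_ge hat hat1
      rw [neg_le_neg_iff]
      rw [le_div_iff₀ hε0, one_mul]
      exact hε1
    calc c * (a - t)⁻¹ ≤ c * (a - t) ^ (-(1/ε)) :=
          mul_le_mul_of_nonneg_left h5 hcpos.le
      _ = (4 * ε * (a - t)) ^ (-(1/ε)) := h4.symm
      _ ≤ (x2 t ^ (-ε)) ^ (-(1/ε)) := h2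
      _ = x2 t := h3
  -- φ monotone
  have hφmono : ∀ s, t1 ≤ s → s < a →
      x1 t1 + c * Real.log (a - t1) ≤ x1 s + c * Real.log (a - s) := by
    intro s ht1s hsa
    have hφ : MonotoneOn (fun u => x1 u + c * Real.log (a - u)) (Set.Icc t1 s) := by
      apply pid_mono_help
      · intro u hu
        have hu0 : 0 ≤ u := le_trans ht10 hu.1
        have hua : u < a := lt_of_le_of_lt hu.2 hsa
        have hau : 0 < a - u := by linarith
        have hlog : HasDerivAt (fun v => Real.log (a - v)) ((a - u)⁻¹ * (-1)) u := by
          have hinner : HasDerivAt (fun v : ℝ => a - v) (-1) u := by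
            simpa using (hasDerivAt_id u).const_sub a
          exact (Real.hasDerivAt_log hau.ne').comp u hinner
        exact (sol u hu0 hua).1.add (hlog.const_mul c)
      · intro u hu
        have hu0 : 0 ≤ u := le_trans ht10 hu.1
        have hua : u < a := lt_of_le_of_lt hu.2 hsa
        have hau : 0 < a - u := by linarith
        have h6 := hlow u hu.1 hua
        nlinarith [h6]
    have := hφ (Set.mem_Icc.mpr ⟨le_refl t1, ht1s⟩) (Set.mem_Icc.mpr ⟨ht1s, le_refl s⟩) ht1s
    simpa using this
  -- contradiction
  set D := x1 t1 + c * Real.log (a - t1) with hD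
  set r : ℝ := min ((a - t1)/2) (Real.exp ((D - (ystar + L) - 1)/c)) with hr
  have hrpos : 0 < r := lt_min (by linarith) (Real.exp_pos _)
  set s := a - r with hs
  have hsa : s < a := by
    have : a - r < a := by linarith
    simpa [hs] using this
  have ht1s : t1 ≤ s := by
    have : r ≤ (a - t1)/2 := min_le_left _ _
    simp only [hs]
    linarith
  have hs0 : 0 ≤ s := le_trans ht10 ht1s
  have h7 := hφmono s ht1s hsa
  have h8 : x1 s ≤ ystar + L := by linarith [hL s hs0 hsa]
  have h9 : Real.log (a - s) ≤ (D - (ystar + L) - 1)/c := by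
    rw [show a - s = r by simp [hs]]
    rw [Real.log_le_iff_le_exp hrpos]
    exact min_le_right _ _
  have h10 : c * Real.log (a - s) ≤ D - (ystar + L) - 1 := by
    have := mul_le_mul_of_nonneg_left h9 hcpos.le
    rw [mul_div_cancel₀ _ hcpos.ne'] at this
    linarith
  linarith [h7, h8, h10]

/-- The autonomous 3-d vector field associated to the PID loop. -/
noncomputable def pidF (ε ystar kp ki kd : ℝ) : ℝ × ℝ × ℝ → ℝ × ℝ × ℝ :=
  fun q => (q.2.1,
    (q.1 ^ 2 + q.2.1 ^ 2) ^ ((1 + ε) / 2) + kp * (q.1 - ystar) + ki * q.2.2 + kd * q.2.1,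
    q.1 - ystar)

lemma pid_contDiffF {ε ystar kp ki kd : ℝ} {q₀ : ℝ × ℝ × ℝ} (h : q₀.1 ^ 2 + q₀.2.1 ^ 2 ≠ 0) :
    ContDiffAt ℝ 1 (pidF ε ystar kp ki kd) q₀ := by
  have hfst : ContDiff ℝ 1 (fun q : ℝ × ℝ × ℝ => q.1) := contDiff_fst
  have hsnd1 : ContDiff ℝ 1 (fun q : ℝ × ℝ × ℝ => q.2.1) := contDiff_fst.comp contDiff_snd
  have hsnd2 : ContDiff ℝ 1 (fun q : ℝ × ℝ × ℝ => q.2.2) := contDiff_snd.comp contDiff_snd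
  have hinner : ContDiff ℝ 1 (fun q : ℝ × ℝ × ℝ => q.1 ^ 2 + q.2.1 ^ 2) :=
    (hfst.pow 2).add (hsnd1.pow 2)
  have hrpow : ContDiffAt ℝ 1 (fun q : ℝ × ℝ × ℝ => (q.1 ^ 2 + q.2.1 ^ 2) ^ ((1 + ε) / 2)) q₀ := by
    exact (Real.contDiffAt_rpow_const_of_ne h).comp q₀ hinner.contDiffAt
  apply ContDiffAt.prodMk
  · exact hsnd1.contDiffAt
  apply ContDiffAt.prodMk
  · exact ((hrpow.add ((contDiff_const.mul (hfst.sub contDiff_const)).contDiffAt)).add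
      ((contDiff_const.mul hsnd2).contDiffAt)).add ((contDiff_const.mul hsnd1).contDiffAt)
  · exact (hfst.sub contDiff_const).contDiffAt

lemma pid_deriv_fst {E F : Type*} [NormedAddCommGroup E] [NormedSpace ℝ E]
    [NormedAddCommGroup F] [NormedSpace ℝ F] {g : ℝ → E × F} {d : E × F} {t : ℝ}
    (hg : HasDerivAt g d t) : HasDerivAt (fun u => (g u).1) d.1 t :=
  (ContinuousLinearMap.fst ℝ E F).hasFDerivAt.comp_hasDerivAt t hg

lemma pid_deriv_snd {E F : Type*} [NormedAddCommGroup E] [NormedSpace ℝ E]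
    [NormedAddCommGroup F] [NormedSpace ℝ F] {g : ℝ → E × F} {d : E × F} {t : ℝ}
    (hg : HasDerivAt g d t) : HasDerivAt (fun u => (g u).2) d.2 t :=
  (ContinuousLinearMap.snd ℝ E F).hasFDerivAt.comp_hasDerivAt t hg

/-- Gluing a left solution and a right solution at `a`. -/
lemma pid_glue_deriv {u v φ : ℝ → ℝ} {a d : ℝ} (h0a : 0 < a)
    (hu : ∀ t ∈ Set.Ioo 0 a, HasDerivAt u (φ t) t)
    (hφ : Filter.Tendsto φ (nhdsWithin a (Set.Iio a)) (nhds d))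
    (hulim : Filter.Tendsto u (nhdsWithin a (Set.Iio a)) (nhds (v a)))
    (hv : HasDerivWithinAt v d (Set.Ici a) a) :
    HasDerivAt (fun t => if t < a then u t else v t) d a := by
  set z := fun t => if t < a then u t else v t with hz
  have hza : z a = v a := by simp [hz]
  have hzu : ∀ t ∈ Set.Ioo 0 a, z t = u t := fun t ht => if_pos ht.2
  have hmemIoo : Set.Ioo 0 a ∈ nhdsWithin a (Set.Iio a) :=
    Ioo_mem_nhdsLT_of_mem ⟨h0a, le_refl a⟩
  have hleft : HasDerivWithinAt z d (Set.Iic a) a := by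
    apply hasDerivWithinAt_Iic_of_tendsto_deriv (s := Set.Ioo 0 a)
    · intro x hx
      have hx' : HasDerivAt z (φ x) x := by
        apply (hu x hx).congr_of_eventuallyEq
        filter_upwards [IsOpen.mem_nhds isOpen_Ioo hx] with y hy
        exact hzu y hy
      exact hx'.differentiableAt.differentiableWithinAt
    · unfold ContinuousWithinAt
      rw [hza]
      have h1 : Filter.Tendsto u (nhdsWithin a (Set.Ioo 0 a)) (nhds (v a)) :=
        hulim.mono_left (nhdsWithin_mono a Set.Ioo_subset_Iio_self)
      apply h1.congr'
      filter_upwards [self_mem_nhdsWithin] with y hy using (hzu y hy).symm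
    · exact hmemIoo
    · apply hφ.congr'
      filter_upwards [hmemIoo] with y hy
      have hy' : HasDerivAt z (φ y) y := by
        apply (hu y hy).congr_of_eventuallyEq
        filter_upwards [IsOpen.mem_nhds isOpen_Ioo hy] with w hw
        exact hzu w hw
      exact (hy'.deriv).symm
  have hright : HasDerivWithinAt z d (Set.Ici a) a := by
    apply hv.congr _ hza
    intro y hy
    simp only [hz]
    rw [if_neg (not_lt.mpr hy)]
  have := hleft.union hright
  rw [Set.Iic_union_Ici] at this
  exact this.hasDerivAt (by simp)

lemma pid_ext_zero {ε ystar kp ki kd M : ℝ} (hM1 : 1 ≤ M) :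
    ∃ b : ℝ, 0 < b ∧ ∃ z1 z2 : ℝ → ℝ, z1 0 = ystar + M ∧ z2 0 = M ∧
      IsSolOn ε ystar kp ki kd z1 z2 b := by
  have hMpos : (0:ℝ) < M := lt_of_lt_of_le one_pos hM1
  set q₀ : ℝ × ℝ × ℝ := (ystar + M, M, 0) with hq₀
  have hne : q₀.1 ^ 2 + q₀.2.1 ^ 2 ≠ 0 := by
    have h : (0:ℝ) < (ystar + M)^2 + M^2 := by nlinarith [sq_nonneg (ystar + M)]
    exact h.ne'
  obtain ⟨g, hg0, δ, hδ, hg⟩ :=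
    (pid_contDiffF (ε := ε) (ystar := ystar)
      (kp := kp) (ki := ki) (kd := kd) hne).exists_forall_mem_closedBall_exists_eq_forall_mem_Ioo_hasDerivAt₀ 0
  have hmem : ∀ u : ℝ, 0 ≤ u → u < δ → u ∈ Set.Ioo (0 - δ) (0 + δ) :=
    fun u hu0 huδ => ⟨by linarith, by linarith⟩
  have hcont : ContinuousOn (fun s => (g s).1 - ystar) (Set.Ioo (0 - δ) (0 + δ)) := by
    intro s hs
    exact (((pid_deriv_fst (hg s hs)).continuousAt).sub continuousAt_const).continuousWithinAt
  have hW : ∀ t, 0 ≤ t → t < δ → (∫ s in (0:ℝ)..t, ((g s).1 - ystar)) = (g t).2.2 := by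
    intro t ht0 htδ
    have hder : ∀ u ∈ Set.Icc (0:ℝ) t,
        HasDerivAt (fun w => (g w).2.2 - ∫ s in (0:ℝ)..w, ((g s).1 - ystar)) 0 u := by
      intro u hu
      have humem := hmem u hu.1 (lt_of_le_of_lt hu.2 htδ)
      have hWd : HasDerivAt (fun w => (g w).2.2) ((g u).1 - ystar) u :=
        pid_deriv_snd (pid_deriv_snd (hg u humem))
      have hint : IntervalIntegrable (fun s => (g s).1 - ystar) volume 0 u := by
        apply ContinuousOn.intervalIntegrable
        apply hcont.mono
        rw [Set.uIcc_of_le hu.1]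
        intro w hw
        exact hmem w hw.1 (lt_of_le_of_lt (le_trans hw.2 hu.2) htδ)
      have hId : HasDerivAt (fun w => ∫ s in (0:ℝ)..w, ((g s).1 - ystar)) ((g u).1 - ystar) u := by
        apply intervalIntegral.integral_hasDerivAt_right hint
        · exact ContinuousOn.stronglyMeasurableAtFilter isOpen_Ioo hcont u humem
        · exact ((pid_deriv_fst (hg u humem)).continuousAt).sub continuousAt_const
      have h := hWd.sub hId
      rw [sub_self] at h; exact h
    have hmono := pid_mono_help hder (fun u _ => le_refl 0)
    have hanti := pid_anti_help hder (fun u _ => le_refl 0)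
    have h0m : (0:ℝ) ∈ Set.Icc (0:ℝ) t := ⟨le_refl 0, ht0⟩
    have htm : t ∈ Set.Icc (0:ℝ) t := ⟨ht0, le_refl t⟩
    have h1 := hmono h0m htm ht0
    have h2 := hanti h0m htm ht0
    simp only at h1 h2
    have hθ0 : (g 0).2.2 - (∫ s in (0:ℝ)..(0:ℝ), ((g s).1 - ystar)) = 0 := by
      rw [intervalIntegral.integral_same, hg0]
      simp [hq₀]
    have : (g t).2.2 - (∫ s in (0:ℝ)..t, ((g s).1 - ystar)) = 0 := by
      rw [intervalIntegral.integral_same, hg0] at h1 h2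
      simp only [hq₀] at h1 h2
      norm_num at h1 h2
      linarith
    linarith [this]
  refine ⟨δ, hδ, fun t => (g t).1, fun t => (g t).2.1,
    by simp only; rw [hg0], by simp only; rw [hg0], ?_⟩
  intro t ht0 htδ
  have hgt := hg t (hmem t ht0 htδ)
  refine ⟨pid_deriv_fst hgt, ?_⟩
  have h2 := pid_deriv_fst (pid_deriv_snd hgt)
  rw [hW t ht0 htδ]
  exact h2

set_option maxHeartbeats 2000000 in
lemma pid_ext_pos {ε ystar kp ki kd K0 M L L2 : ℝ} {x1 x2 : ℝ → ℝ} {a : ℝ}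
    (hε0 : 0 < ε) (hε1 : ε ≤ 1)
    (hkp : |kp| ≤ K0) (hki : |ki| ≤ K0) (hkd : |kd| ≤ K0) (hK1 : 1 ≤ K0)
    (hM8 : 8 * K0 ≤ M ^ ε) (hM1 : 1 ≤ M)
    (sol : IsSolOn ε ystar kp ki kd x1 x2 a)
    (hx10 : x1 0 = ystar + M) (hx20 : x2 0 = M) (h0a : 0 < a)
    (hL : ∀ t, 0 ≤ t → t < a → x1 t - ystar ≤ L)
    (hL2 : ∀ t, 0 ≤ t → t < a → x2 t ≤ L2) :
    ∃ b, a < b ∧ ∃ z1 z2 : ℝ → ℝ, z1 0 = ystar + M ∧ z2 0 = M ∧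
      IsSolOn ε ystar kp ki kd z1 z2 b ∧
      (∀ t, 0 ≤ t → t < a → z1 t = x1 t ∧ z2 t = x2 t) := by
  have hMpos : (0:ℝ) < M := lt_of_lt_of_le one_pos hM1
  have hboot := pid_boot hε0 hε1 hkp hki hkd hK1 hM8 hM1 sol hx10 hx20
  have hcore : ∀ t, 0 ≤ t → t < a →
      M ≤ x1 t - ystar ∧
      0 ≤ (∫ s in (0:ℝ)..t, (x1 s - ystar)) ∧
      (∫ s in (0:ℝ)..t, (x1 s - ystar)) ≤ 2 * (x1 t - ystar) ∧
      (1/8) * x2 t ^ (1 + ε) ≤ pidRHS ε ystar kp ki kd x1 x2 t ∧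
      M ≤ 2 * pidRHS ε ystar kp ki kd x1 x2 t - x2 t := by
    intro t ht0 hta
    exact pid_core hε0 hε1 hkp hki hkd hK1 hM8 hM1 sol hx10 hx20 ht0 hta
      (fun u hu0 hus => hboot u hu0 (lt_of_le_of_lt hus hta))
  set I : ℝ → ℝ := fun t => ∫ s in (0:ℝ)..t, (x1 s - ystar) with hIdef
  have hconte : ∀ {u v : ℝ}, 0 ≤ u → v < a →
      ContinuousOn (fun s => x1 s - ystar) (Set.Icc u v) := by
    intro u v hu hv s hs
    have hs0 : 0 ≤ s := le_trans hu hs.1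
    have hsa : s < a := lt_of_le_of_lt hs.2 hv
    exact (((sol s hs0 hsa).1.continuousAt).sub continuousAt_const).continuousWithinAt
  have hinte : ∀ {u v : ℝ}, 0 ≤ u → u ≤ v → v < a →
      IntervalIntegrable (fun s => x1 s - ystar) volume u v := by
    intro u v hu huv hv
    apply ContinuousOn.intervalIntegrable
    rw [Set.uIcc_of_le huv]
    exact hconte hu hv
  have hImono : MonotoneOn I (Set.Ico 0 a) := by
    intro u hu v hv huv
    have hsplit : I u + (∫ s in u..v, (x1 s - ystar)) = I v :=
      intervalIntegral.integral_add_adjacent_intervals (hinte (le_refl 0) hu.1 hu.2)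
        (hinte hu.1 huv hv.2)
    have hpos : 0 ≤ ∫ s in u..v, (x1 s - ystar) := by
      apply intervalIntegral.integral_nonneg huv
      intro s hs
      have hs0 : 0 ≤ s := le_trans hu.1 hs.1
      have hsa : s < a := lt_of_le_of_lt hs.2 hv.2
      linarith [(hcore s hs0 hsa).1, hMpos]
    linarith [hsplit, hpos]
  have hx1mono : MonotoneOn x1 (Set.Ico 0 a) := by
    apply pid_mono_help_Ico (fun t ht => (sol t ht.1 ht.2).1)
    intro t ht
    linarith [(hboot t ht.1 ht.2).1, hMpos]
  have hx2mono : MonotoneOn x2 (Set.Ico 0 a) := by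
    apply pid_mono_help_Ico (fun t ht => pid_sol_rhs sol ht.1 ht.2)
    intro t ht
    have h1 := (hcore t ht.1 ht.2).2.2.2.1
    have h2 : 0 < x2 t := lt_of_lt_of_le hMpos (hboot t ht.1 ht.2).1
    have : (0:ℝ) < (1/8) * x2 t ^ (1+ε) := by positivity
    linarith
  obtain ⟨A1, hA1tend, hA1ub, hA1ge, _⟩ := pid_mono_limit (L := L + ystar) h0a hx1mono
    (fun t ht => by linarith [hL t ht.1 ht.2])
  obtain ⟨A2, hA2tend, hA2ub, hA2ge, _⟩ := pid_mono_limit h0a hx2mono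
    (fun t ht => hL2 t ht.1 ht.2)
  obtain ⟨A3, hA3tend, hA3ub, _, _⟩ := pid_mono_limit (L := 2 * L) h0a hImono
    (fun t ht => by
      have h1 := (hcore t ht.1 ht.2).2.2.1
      have h2 := hL t ht.1 ht.2
      simp only [hIdef]
      linarith)
  have hA2M : M ≤ A2 := by rw [← hx20]; exact hA2ge
  have hA2pos : 0 < A2 := lt_of_lt_of_le hMpos hA2M
  set q₀ : ℝ × ℝ × ℝ := (A1, A2, A3) with hq₀
  have hne : q₀.1 ^ 2 + q₀.2.1 ^ 2 ≠ 0 := by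
    have h : (0:ℝ) < A1^2 + A2^2 := by nlinarith [sq_nonneg A1]
    exact h.ne'
  obtain ⟨g, hga, δ, hδ, hg⟩ :=
    (pid_contDiffF (ε := ε) (ystar := ystar)
      (kp := kp) (ki := ki) (kd := kd) hne).exists_forall_mem_closedBall_exists_eq_forall_mem_Ioo_hasDerivAt₀ a
  set b := a + δ with hb
  have hab : a < b := by simp [hb]; linarith
  have hgmem : ∀ t, a ≤ t → t < b → t ∈ Set.Ioo (a - δ) (a + δ) :=
    fun t h1 h2 => ⟨by linarith, by simpa [hb] using h2⟩
  have hamem : a ∈ Set.Ioo (a - δ) (a + δ) := ⟨by linarith, by linarith⟩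
  have hga1 : (g a).1 = A1 := by rw [hga]
  have hga2 : (g a).2.1 = A2 := by rw [hga]
  have hga3 : (g a).2.2 = A3 := by rw [hga]
  set z1 : ℝ → ℝ := fun t => if t < a then x1 t else (g t).1 with hz1
  set z2 : ℝ → ℝ := fun t => if t < a then x2 t else (g t).2.1 with hz2
  set W : ℝ → ℝ := fun t => if t < a then I t else (g t).2.2 with hWdef
  -- limit of the right-hand side
  have hneA : A1^2 + A2^2 ≠ 0 := hne
  have hGtend : Filter.Tendsto (fun t => pidRHS ε ystar kp ki kd x1 x2 t)
      (nhdsWithin a (Set.Iio a))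
      (nhds ((A1^2 + A2^2) ^ ((1+ε)/2) + kp * (A1 - ystar) + ki * A3 + kd * A2)) := by
    unfold pidRHS
    apply Filter.Tendsto.add
    apply Filter.Tendsto.add
    apply Filter.Tendsto.add
    · have hsq : Filter.Tendsto (fun t => x1 t ^ 2 + x2 t ^ 2) (nhdsWithin a (Set.Iio a))
          (nhds (A1^2 + A2^2)) := (hA1tend.pow 2).add (hA2tend.pow 2)
      exact ((Real.continuousAt_rpow_const _ _ (Or.inl hneA)).tendsto).comp hsq
    · exact (hA1tend.sub_const ystar).const_mul kp
    · exact hA3tend.const_mul ki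
    · exact hA2tend.const_mul kd
  -- glued derivative of z1
  have claimD1 : ∀ t, 0 ≤ t → t < b → HasDerivAt z1 (z2 t) t := by
    intro t ht0 htb
    rcases lt_trichotomy t a with hlt | heq | hgt
    · have heq : z1 =ᶠ[nhds t] x1 := by
        filter_upwards [Iio_mem_nhds hlt] with y hy
        exact show z1 y = x1 y from if_pos hy
      have h := ((sol t ht0 hlt).1).congr_of_eventuallyEq heq
      have hval : z2 t = x2 t := if_pos hlt
      rw [hval]
      exact h
    · subst heq
      have hval : z2 t = A2 := by rw [hz2]; simp only [lt_irrefl, if_false]; exact hga2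
      rw [hz1, hval]
      apply pid_glue_deriv h0a (fun s hs => (sol s hs.1.le hs.2).1)
      · exact hA2tend
      · convert hA1tend using 2
      · have h := (pid_deriv_fst (hg t hamem)).hasDerivWithinAt (s := Set.Ici t)
        have hval2 : (pidF ε ystar kp ki kd (g t)).1 = A2 := by
          simp only [pidF]; exact hga2
        rw [hval2] at h
        exact h
    · have h := (pid_deriv_fst (hg t (hgmem t hgt.le htb))).congr_of_eventuallyEq
        (f₁ := z1) (by
          filter_upwards [Ioi_mem_nhds hgt] with y hy
          rw [hz1]; simp only
          rw [if_neg (not_lt.mpr (le_of_lt hy))])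
      have hval : z2 t = (g t).2.1 := if_neg (not_lt.mpr hgt.le)
      rw [hval]
      exact h
  -- glued derivative of z2
  have claimD2 : ∀ t, 0 ≤ t → t < b → HasDerivAt z2
      ((z1 t ^ 2 + z2 t ^ 2) ^ ((1+ε)/2) + kp * (z1 t - ystar) + ki * W t + kd * z2 t) t := by
    intro t ht0 htb
    rcases lt_trichotomy t a with hlt | heq | hgt
    · have h := (pid_sol_rhs sol ht0 hlt).congr_of_eventuallyEq
        (f₁ := z2) (by filter_upwards [Iio_mem_nhds hlt] with y hy using if_pos hy)
      have h1 : z1 t = x1 t := if_pos hlt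
      have h2 : z2 t = x2 t := if_pos hlt
      have h3 : W t = I t := if_pos hlt
      rw [h1, h2, h3]
      exact h
    · subst heq
      have h1 : z1 t = A1 := by rw [hz1]; simp only [lt_irrefl, if_false]; exact hga1
      have h2 : z2 t = A2 := by rw [hz2]; simp only [lt_irrefl, if_false]; exact hga2
      have h3 : W t = A3 := by rw [hWdef]; simp only [lt_irrefl, if_false]; exact hga3
      rw [h1, h2, h3, hz2]
      apply pid_glue_deriv h0a (fun s hs => pid_sol_rhs sol hs.1.le hs.2)
      · exact hGtend
      · convert hA2tend using 2
      · have h := (pid_deriv_fst (pid_deriv_snd (hg t hamem))).hasDerivWithinAt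
          (s := Set.Ici t)
        have hval2 : (pidF ε ystar kp ki kd (g t)).2.1
            = (A1^2 + A2^2) ^ ((1+ε)/2) + kp * (A1 - ystar) + ki * A3 + kd * A2 := by
          simp only [pidF]; rw [hga1, hga2, hga3]
        rw [hval2] at h
        exact h
    · have h := (pid_deriv_fst (pid_deriv_snd (hg t (hgmem t hgt.le htb)))).congr_of_eventuallyEq
        (f₁ := z2) (by
          filter_upwards [Ioi_mem_nhds hgt] with y hy
          rw [hz2]; simp only
          rw [if_neg (not_lt.mpr (le_of_lt hy))])
      have h1 : z1 t = (g t).1 := if_neg (not_lt.mpr hgt.le)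
      have h2 : z2 t = (g t).2.1 := if_neg (not_lt.mpr hgt.le)
      have h3 : W t = (g t).2.2 := if_neg (not_lt.mpr hgt.le)
      rw [h1, h2, h3]
      exact h
  -- glued derivative of W
  have hcontIoo : ContinuousOn (fun s => x1 s - ystar) (Set.Ioo 0 a) := by
    intro s hs
    exact (((sol s hs.1.le hs.2).1.continuousAt).sub continuousAt_const).continuousWithinAt
  have hId : ∀ s ∈ Set.Ioo 0 a, HasDerivAt I (x1 s - ystar) s := by
    intro s hs
    apply intervalIntegral.integral_hasDerivAt_right (hinte (le_refl 0) hs.1.le hs.2)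
    · exact ContinuousOn.stronglyMeasurableAtFilter isOpen_Ioo hcontIoo s hs
    · exact ((sol s hs.1.le hs.2).1.continuousAt).sub continuousAt_const
  have claimDW : ∀ t, 0 < t → t < b → HasDerivAt W (z1 t - ystar) t := by
    intro t ht0 htb
    rcases lt_trichotomy t a with hlt | heq | hgt
    · have h := (hId t ⟨ht0, hlt⟩).congr_of_eventuallyEq
        (f₁ := W) (by
          filter_upwards [Iio_mem_nhds hlt] with y hy using if_pos hy)
      have h1 : z1 t = x1 t := if_pos hlt
      rw [h1]
      exact h
    · subst heq
      have h1 : z1 t = A1 := by rw [hz1]; simp only [lt_irrefl, if_false]; exact hga1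
      rw [h1, hWdef]
      apply pid_glue_deriv h0a hId
      · exact hA1tend.sub_const ystar
      · convert hA3tend using 2
      · have h := (pid_deriv_snd (pid_deriv_snd (hg t hamem))).hasDerivWithinAt
          (s := Set.Ici t)
        have hval2 : (pidF ε ystar kp ki kd (g t)).2.2 = A1 - ystar := by
          simp only [pidF]; rw [hga1]
        rw [hval2] at h
        exact h
    · have h := (pid_deriv_snd (pid_deriv_snd (hg t (hgmem t hgt.le htb)))).congr_of_eventuallyEq
        (f₁ := W) (by
          filter_upwards [Ioi_mem_nhds hgt] with y hy
          rw [hWdef]; simp only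
          rw [if_neg (not_lt.mpr (le_of_lt hy))])
      have h1 : z1 t = (g t).1 := if_neg (not_lt.mpr hgt.le)
      rw [h1]
      have hval2 : (pidF ε ystar kp ki kd (g t)).2.2 = (g t).1 - ystar := by
        simp only [pidF]
      rw [hval2] at h
      exact h
  -- identification of W with the integral of z1 - ystar
  have hz1cont : ∀ s, 0 ≤ s → s < b → ContinuousAt z1 s :=
    fun s hs0 hsb => (claimD1 s hs0 hsb).continuousAt
  have hz1contOn : ContinuousOn z1 (Set.Ioo 0 b) :=
    fun s hs => (hz1cont s hs.1.le hs.2).continuousWithinAt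
  have hzint : ∀ {w : ℝ}, 0 ≤ w → w < b → IntervalIntegrable (fun s => z1 s - ystar) volume 0 w := by
    intro w hw0 hwb
    apply ContinuousOn.intervalIntegrable
    rw [Set.uIcc_of_le hw0]
    intro s hs
    exact ((hz1cont s hs.1 (lt_of_le_of_lt hs.2 hwb)).sub continuousAt_const).continuousWithinAt
  have claimWlt : ∀ t, 0 ≤ t → t < a → (∫ s in (0:ℝ)..t, (z1 s - ystar)) = W t := by
    intro t ht0 hta
    have hcongr : (∫ s in (0:ℝ)..t, (z1 s - ystar)) = ∫ s in (0:ℝ)..t, (x1 s - ystar) := by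
      apply intervalIntegral.integral_congr
      intro s hs
      rw [Set.uIcc_of_le ht0] at hs
      have : z1 s = x1 s := if_pos (lt_of_le_of_lt hs.2 hta)
      simp only [this]
    rw [hcongr]
    exact (if_pos hta).symm
  have claimW : ∀ t, 0 ≤ t → t < b → (∫ s in (0:ℝ)..t, (z1 s - ystar)) = W t := by
    intro t ht0 htb
    rcases lt_or_ge t a with hlt | hge
    · exact claimWlt t ht0 hlt
    · set c : ℝ := a/2 with hc
      have hc0 : 0 < c := by positivity
      have hca : c < a := by simp [hc]; linarith
      have hct : c ≤ t := le_trans hca.le hge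
      have hIzd : ∀ u ∈ Set.Icc c t,
          HasDerivAt (fun w => ∫ s in (0:ℝ)..w, (z1 s - ystar)) (z1 u - ystar) u := by
        intro u hu
        have hu0 : 0 < u := lt_of_lt_of_le hc0 hu.1
        have hub : u < b := lt_of_le_of_lt hu.2 htb
        apply intervalIntegral.integral_hasDerivAt_right (hzint hu0.le hub)
        · exact ContinuousOn.stronglyMeasurableAtFilter isOpen_Ioo
            (fun s hs => ((hz1cont s hs.1.le hs.2).sub continuousAt_const).continuousWithinAt)
            u ⟨hu0, hub⟩
        · exact ((hz1cont u hu0.le hub).sub continuousAt_const)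
      have hθd : ∀ u ∈ Set.Icc c t,
          HasDerivAt (fun w => W w - ∫ s in (0:ℝ)..w, (z1 s - ystar)) 0 u := by
        intro u hu
        have hu0 : 0 < u := lt_of_lt_of_le hc0 hu.1
        have hub : u < b := lt_of_le_of_lt hu.2 htb
        have h := (claimDW u hu0 hub).sub (hIzd u hu)
        rw [sub_self] at h; exact h
      have hmono := pid_mono_help hθd (fun u _ => le_refl 0)
      have hanti := pid_anti_help hθd (fun u _ => le_refl 0)
      have hcm : c ∈ Set.Icc c t := ⟨le_refl c, hct⟩
      have htm : t ∈ Set.Icc c t := ⟨hct, le_refl t⟩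
      have h1 := hmono hcm htm hct
      have h2 := hanti hcm htm hct
      simp only at h1 h2
      have hbase : W c - (∫ s in (0:ℝ)..c, (z1 s - ystar)) = 0 := by
        rw [claimWlt c hc0.le hca]; ring
      have : W t - (∫ s in (0:ℝ)..t, (z1 s - ystar)) = 0 := by
        rw [hbase] at h1 h2
        linarith
      linarith [this]
  refine ⟨b, hab, z1, z2, ?_, ?_, ?_, ?_⟩
  · rw [hz1]; simp only [if_pos h0a]; exact hx10
  · rw [hz2]; simp only [if_pos h0a]; exact hx20
  · intro t ht0 htb
    refine ⟨claimD1 t ht0 htb, ?_⟩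
    have h := claimD2 t ht0 htb
    rw [← claimW t ht0 htb] at h
    exact h
  · intro t ht0 hta
    exact ⟨show z1 t = x1 t from if_pos hta, show z2 t = x2 t from if_pos hta⟩


theorem pid_finite_escape_time
    (ε ystar kp ki kd : ℝ) (hε0 : 0 < ε) (hε1 : ε ≤ 1) :
    ∃ x10 x20 : ℝ,
      -- no solution with this initial value extends to all of [0, ∞):
      -- the maximal interval of existence [0, a) is finite
      (¬ ∃ x1 x2 : ℝ → ℝ, x1 0 = x10 ∧ x2 0 = x20 ∧
        ∀ t : ℝ, 0 ≤ t →
          HasDerivAt x1 (x2 t) t ∧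
          HasDerivAt x2 (((x1 t) ^ 2 + (x2 t) ^ 2) ^ ((1 + ε) / 2)
            + kp * (x1 t - ystar) + ki * (∫ s in (0:ℝ)..t, (x1 s - ystar))
            + kd * x2 t) t) ∧
      -- every maximal (non-extendable) solution on a finite interval [0, a)
      -- has error blowing up: e(t) → ∞ as t → a⁻
      (∀ a : ℝ, ∀ x1 x2 : ℝ → ℝ, x1 0 = x10 → x2 0 = x20 →
        IsSolOn ε ystar kp ki kd x1 x2 a →
        (¬ ∃ b : ℝ, a < b ∧ ∃ z1 z2 : ℝ → ℝ,
          z1 0 = x10 ∧ z2 0 = x20 ∧ IsSolOn ε ystar kp ki kd z1 z2 b ∧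
          (∀ t, 0 ≤ t → t < a → z1 t = x1 t ∧ z2 t = x2 t)) →
        Tendsto (fun t => x1 t - ystar) (nhdsWithin a (Set.Iio a)) atTop) := by
  set K0 : ℝ := 1 + |kp| + |ki| + |kd| with hK0
  have hkp : |kp| ≤ K0 := by rw [hK0]; linarith [abs_nonneg ki, abs_nonneg kd]
  have hki : |ki| ≤ K0 := by rw [hK0]; linarith [abs_nonneg kp, abs_nonneg kd]
  have hkd : |kd| ≤ K0 := by rw [hK0]; linarith [abs_nonneg kp, abs_nonneg ki]
  have hK1 : 1 ≤ K0 := by rw [hK0]; linarith [abs_nonneg kp, abs_nonneg ki, abs_nonneg kd]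
  have hKpos : (0:ℝ) < K0 := lt_of_lt_of_le one_pos hK1
  set N : ℝ := 8 * K0 / ε + 8 * K0 with hN
  have hNpos : 0 < N := by positivity
  have hN1 : 1 ≤ N := by
    have h1 : (0:ℝ) < 8 * K0 / ε := by positivity
    rw [hN]; linarith
  set M : ℝ := N ^ (1/ε) with hM
  have hM1 : 1 ≤ M := by
    rw [hM]
    calc (1:ℝ) = N ^ (0:ℝ) := (Real.rpow_zero N).symm
      _ ≤ N ^ (1/ε) := Real.rpow_le_rpow_of_exponent_le hN1 (by positivity)
  have hMε : M ^ ε = N := by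
    rw [hM, ← Real.rpow_mul hNpos.le, one_div_mul_cancel hε0.ne', Real.rpow_one]
  have hM8 : 8 * K0 ≤ M ^ ε := by
    rw [hMε, hN]
    have : (0:ℝ) < 8 * K0 / ε := by positivity
    linarith
  have hM8e : 8 * K0 / ε ≤ M ^ ε := by
    rw [hMε, hN]
    linarith
  refine ⟨ystar + M, M, ?_, ?_⟩
  · -- no global solution
    rintro ⟨x1, x2, h10, h20, hsol⟩
    have sol' : IsSolOn ε ystar kp ki kd x1 x2 (1/K0 + 1) := fun t ht0 _ => hsol t ht0
    have := pid_quarter hε0 hε1 hkp hki hkd hK1 hM8 hM8e hM1 sol' h10 h20 (1/K0)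
      (by positivity) (by linarith)
    exact absurd this (lt_irrefl _)
  · -- every maximal solution blows up
    intro a x1 x2 h10 h20 sol hmax
    rcases lt_trichotomy a 0 with ha | ha | ha
    · exfalso
      apply hmax
      refine ⟨a/2, by linarith, fun _ => ystar + M, fun _ => M, rfl, rfl, ?_, ?_⟩
      · intro t ht0 htb
        exact absurd (lt_of_le_of_lt ht0 htb) (by linarith)
      · intro t ht0 hta
        exact absurd (lt_of_le_of_lt ht0 hta) (by linarith)
    · exfalso
      apply hmax
      obtain ⟨b, hb, z1, z2, hz10, hz20, hsolz⟩ :=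
        pid_ext_zero (ε := ε) (ystar := ystar) (kp := kp) (ki := ki) (kd := kd) hM1
      refine ⟨b, by linarith, z1, z2, hz10, hz20, hsolz, ?_⟩
      intro t ht0 hta
      exact absurd (lt_of_le_of_lt ht0 hta) (by linarith)
    · -- 0 < a
      have hboot := pid_boot hε0 hε1 hkp hki hkd hK1 hM8 hM1 sol h10 h20
      by_cases hEb : ∀ C : ℝ, ∃ t, 0 ≤ t ∧ t < a ∧ C < x1 t - ystar
      · -- error unbounded: conclude blow-up
        have hemono : MonotoneOn (fun t => x1 t - ystar) (Set.Ico 0 a) := by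
          apply pid_mono_help_Ico (fun t ht => ((sol t ht.1 ht.2).1).sub_const ystar)
          intro t ht
          have := (hboot t ht.1 ht.2).1
          linarith [hM1]
        apply pid_mono_unbdd ha hemono
        intro C
        obtain ⟨t, ht0, hta, htC⟩ := hEb C
        exact ⟨t, ⟨ht0, hta⟩, htC⟩
      · exfalso
        push_neg at hEb
        obtain ⟨L, hL⟩ := hEb
        by_cases hx2b : ∀ C : ℝ, ∃ t, 0 ≤ t ∧ t < a ∧ C < x2 t
        · exact pid_x2_unbdd_absurd hε0 hε1 hkp hki hkd hK1 hM8 hM8e hM1 sol h10 h20 ha hL hx2b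
        · push_neg at hx2b
          obtain ⟨L2, hL2⟩ := hx2b
          apply hmax
          exact pid_ext_pos hε0 hε1 hkp hki hkd hK1 hM8 hM1 sol h10 h20 ha hL hL2
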